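/- Let L be a locally compact Hausdorff space, Y a real Banach space, E a closed subspace of C_b(L,Y), and E₀ = E ∩ C₀(L,Y). Assume the closed unit ball of E₀ is dense in the closed unit ball of E for the topology of uniform convergence on compact subsets of L. Then E₀ has the 3-ball property in E: for every f ∈ C_b(L,Y) in the closed unit ball of E, every g₁, g₂, g₃ in the closed unit ball of E₀ and every ε > 0 there exists g ∈ E₀ such that ‖f + gᵢ − g‖_∞ ≤ 1 + ε for i = 1, 2, 3. -/

import Mathlib

/-- A bounded continuous function vanishes at infinity if `{t | ε ≤ ‖f t‖}` is compact
for every `ε > 0`. -/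
def ZeroAtInfty {L Y : Type*} [TopologicalSpace L] [NormedAddCommGroup Y]
    (f : BoundedContinuousFunction L Y) : Prop :=
  ∀ ε > (0 : ℝ), IsCompact {t : L | ε ≤ ‖f t‖}

section Aux

variable {L Y : Type*} [TopologicalSpace L] [NormedAddCommGroup Y]

lemma zeroAtInfty_isClosed_set (f : BoundedContinuousFunction L Y) (ε : ℝ) :
    IsClosed {t : L | ε ≤ ‖f t‖} :=
  isClosed_le continuous_const f.continuous.norm

lemma ZeroAtInfty.add {f g : BoundedContinuousFunction L Y}
    (hf : ZeroAtInfty f) (hg : ZeroAtInfty g) : ZeroAtInfty (f + g) := by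
  intro ε hε
  refine IsCompact.of_isClosed_subset
    ((hf (ε/2) (by linarith)).union (hg (ε/2) (by linarith)))
    (zeroAtInfty_isClosed_set _ _) ?_
  intro t ht
  simp only [Set.mem_setOf_eq, BoundedContinuousFunction.coe_add, Pi.add_apply] at ht
  by_contra hc
  simp only [Set.mem_union, Set.mem_setOf_eq] at hc
  push_neg at hc
  have := norm_add_le (f t) (g t)
  linarith [hc.1, hc.2]

lemma zeroAtInfty_zero : ZeroAtInfty (0 : BoundedContinuousFunction L Y) := by
  intro ε hε
  convert isCompact_empty
  ext t
  simp [hε.not_ge]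

lemma ZeroAtInfty.smul [NormedSpace ℝ Y] (c : ℝ) {f : BoundedContinuousFunction L Y}
    (hf : ZeroAtInfty f) : ZeroAtInfty (c • f) := by
  rcases eq_or_ne c 0 with hc | hc
  · simpa [hc] using zeroAtInfty_zero (L := L) (Y := Y)
  · intro ε hε
    have hcpos : 0 < |c| := abs_pos.mpr hc
    refine IsCompact.of_isClosed_subset (hf (ε / |c|) (by positivity))
      (zeroAtInfty_isClosed_set _ _) ?_
    intro t ht
    simp only [Set.mem_setOf_eq, BoundedContinuousFunction.coe_smul, Pi.smul_apply,
      norm_smul, Real.norm_eq_abs] at ht ⊢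
    rw [div_le_iff₀ hcpos]
    linarith [ht]

lemma zeroAtInfty_sum {ι : Type*} (s : Finset ι) (f : ι → BoundedContinuousFunction L Y)
    (hf : ∀ i ∈ s, ZeroAtInfty (f i)) : ZeroAtInfty (∑ i ∈ s, f i) := by
  classical
  induction s using Finset.induction_on with
  | empty => simpa using zeroAtInfty_zero (L := L) (Y := Y)
  | insert _ _ hns ih =>
    rw [Finset.sum_insert hns]
    exact (hf _ (Finset.mem_insert_self _ _)).add
      (ih fun i hi => hf i (Finset.mem_insert_of_mem hi))

end Aux

/-- If the closed unit ball of `E₀ = E ∩ C₀(L,Y)` is dense in the closed unit ball of `E`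
for the topology of uniform convergence on compact subsets of `L`, then `E₀` has the
3-ball property in `E`. -/
theorem threeBallProperty_of_denseUnifOnCompacts {L Y : Type*}
    [TopologicalSpace L] [LocallyCompactSpace L] [T2Space L]
    [NormedAddCommGroup Y] [NormedSpace ℝ Y] [CompleteSpace Y]
    (E : Submodule ℝ (BoundedContinuousFunction L Y))
    (hE : IsClosed (E : Set (BoundedContinuousFunction L Y)))
    (hdense : ∀ f ∈ E, ‖f‖ ≤ 1 → ∀ K : Set L, IsCompact K → ∀ ε > (0 : ℝ),
      ∃ g ∈ E, ZeroAtInfty g ∧ ‖g‖ ≤ 1 ∧ ∀ t ∈ K, ‖f t - g t‖ ≤ ε) :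
    ∀ f ∈ E, ‖f‖ ≤ 1 →
      ∀ g₁ ∈ E, ∀ g₂ ∈ E, ∀ g₃ ∈ E,
        ZeroAtInfty g₁ → ZeroAtInfty g₂ → ZeroAtInfty g₃ →
        ‖g₁‖ ≤ 1 → ‖g₂‖ ≤ 1 → ‖g₃‖ ≤ 1 →
        ∀ ε > (0 : ℝ), ∃ g ∈ E, ZeroAtInfty g ∧
          ‖f + g₁ - g‖ ≤ 1 + ε ∧ ‖f + g₂ - g‖ ≤ 1 + ε ∧ ‖f + g₃ - g‖ ≤ 1 + ε := by
  classical
  intro f hfE hf1 g₁ hg₁E g₂ hg₂E g₃ hg₃E hz₁ hz₂ hz₃ hn₁ hn₂ hn₃ ε hε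
  set δ : ℝ := ε / 4 with hδdef
  have hδ : 0 < δ := by positivity
  -- choice function giving approximants on compacts
  choose! F hFE hF0 hF1 hFapprox using
    fun (A : Set L) (hA : IsCompact A) => hdense f hfE hf1 A hA δ hδ
  -- the base compact set where g₁, g₂, g₃ can be large
  set K0 : Set L := {t | δ ≤ ‖g₁ t‖} ∪ {t | δ ≤ ‖g₂ t‖} ∪ {t | δ ≤ ‖g₃ t‖} with hK0def
  have hK0c : IsCompact K0 := ((hz₁ δ hδ).union (hz₂ δ hδ)).union (hz₃ δ hδ)
  -- increasing chain of compacts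
  let Ks : ℕ → Set L := fun k => Nat.rec (motive := fun _ => Set L) K0 (fun _ A => A ∪ {t | δ ≤ ‖F A t‖}) k
  have hKs0 : Ks 0 = K0 := rfl
  have hKsS : ∀ k, Ks (k + 1) = Ks k ∪ {t | δ ≤ ‖F (Ks k) t‖} := fun k => rfl
  have hKsc : ∀ k, IsCompact (Ks k) := by
    intro k
    induction k with
    | zero => exact hK0c
    | succ k ih => exact ih.union (hF0 (Ks k) ih δ hδ)
  have hKsmono : ∀ j k, j ≤ k → Ks j ⊆ Ks k := by
    intro j k hjk
    induction hjk with
    | refl => exact subset_rfl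
    | step _ ih => exact ih.trans (by rw [hKsS]; exact Set.subset_union_left)
  set h : ℕ → BoundedContinuousFunction L Y := fun k => F (Ks k) with hhdef
  have hhE : ∀ k, h k ∈ E := fun k => hFE _ (hKsc k)
  have hh0 : ∀ k, ZeroAtInfty (h k) := fun k => hF0 _ (hKsc k)
  have hh1 : ∀ k, ‖h k‖ ≤ 1 := fun k => hF1 _ (hKsc k)
  have hhapprox : ∀ k, ∀ t ∈ Ks k, ‖f t - h k t‖ ≤ δ := fun k => hFapprox _ (hKsc k)
  have hhsmall : ∀ k, ∀ t, t ∉ Ks (k + 1) → ‖h k t‖ ≤ δ := by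
    intro k t ht
    rw [hKsS] at ht
    have : ¬ δ ≤ ‖h k t‖ := fun hc => ht (Set.mem_union_right _ hc)
    linarith [not_le.mp this]
  -- choose n
  obtain ⟨n, hn⟩ := exists_nat_gt (2 / ε)
  have hnpos : (0 : ℝ) < n := lt_trans (by positivity) hn
  have hnne : (n : ℝ) ≠ 0 := ne_of_gt hnpos
  -- the candidate
  set g : BoundedContinuousFunction L Y :=
    (n : ℝ)⁻¹ • ∑ k ∈ Finset.range n, h k with hgdef
  refine ⟨g, ?_, ?_, ?_⟩
  · exact Submodule.smul_mem _ _ (Submodule.sum_mem _ fun k _ => hhE k)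
  · exact ZeroAtInfty.smul _ (zeroAtInfty_sum _ _ fun k _ => hh0 k)
  -- the main estimate, uniform in which gᵢ we use
  have main : ∀ gi : BoundedContinuousFunction L Y, ‖gi‖ ≤ 1 →
      (∀ t, t ∉ K0 → ‖gi t‖ ≤ δ) → ‖f + gi - g‖ ≤ 1 + ε := by
    intro gi hgi1 hgismall
    have h1ε : (0:ℝ) ≤ 1 + ε := by linarith
    rw [BoundedContinuousFunction.norm_le h1ε]
    intro t
    -- pointwise decomposition
    have hgt : g t = (n : ℝ)⁻¹ • ∑ k ∈ Finset.range n, h k t := by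
      simp [hgdef]
    have hdecomp : (f + gi - g) t
        = (n : ℝ)⁻¹ • ∑ k ∈ Finset.range n, (f t + gi t - h k t) := by
      have : ∑ k ∈ Finset.range n, (f t + gi t - h k t)
          = n • (f t + gi t) - ∑ k ∈ Finset.range n, h k t := by
        rw [Finset.sum_sub_distrib, Finset.sum_const, Finset.card_range]
      rw [this, smul_sub, ← Nat.cast_smul_eq_nsmul ℝ, smul_smul,
        inv_mul_cancel₀ hnne, one_smul]
      simp [hgt, sub_eq_add_neg]
    -- per-term bounds
    have hterm : ∀ k, ‖f t + gi t - h k t‖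
        ≤ (1 + 2 * δ) + (if t ∉ Ks k ∧ t ∈ Ks (k + 1) then (1:ℝ) else 0) := by
      intro k
      by_cases hk : t ∈ Ks k
      · -- good approximation on Ks k
        have h1 : ‖f t - h k t‖ ≤ δ := hhapprox k t hk
        have h2 : ‖gi t‖ ≤ 1 := le_trans (gi.norm_coe_le_norm t) hgi1
        have : ‖f t + gi t - h k t‖ ≤ ‖f t - h k t‖ + ‖gi t‖ := by
          have := norm_add_le (f t - h k t) (gi t)
          calc ‖f t + gi t - h k t‖ = ‖(f t - h k t) + gi t‖ := by
                congr 1; abel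
            _ ≤ _ := this
        have hite : (0:ℝ) ≤ (if t ∉ Ks k ∧ t ∈ Ks (k + 1) then (1:ℝ) else 0) := by
          split <;> norm_num
        linarith
      · -- t outside Ks k, hence outside K0, so gi is small
        have hK0 : t ∉ K0 := fun hc => hk (hKsmono 0 k (Nat.zero_le _) hc)
        have h2 : ‖gi t‖ ≤ δ := hgismall t hK0
        have hf' : ‖f t‖ ≤ 1 := le_trans (f.norm_coe_le_norm t) hf1
        have htri : ‖f t + gi t - h k t‖ ≤ ‖f t‖ + ‖gi t‖ + ‖h k t‖ := by
          calc ‖f t + gi t - h k t‖ ≤ ‖f t + gi t‖ + ‖h k t‖ := norm_sub_le _ _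
            _ ≤ ‖f t‖ + ‖gi t‖ + ‖h k t‖ := by linarith [norm_add_le (f t) (gi t)]
        by_cases hk1 : t ∈ Ks (k + 1)
        · have h3 : ‖h k t‖ ≤ 1 := le_trans ((h k).norm_coe_le_norm t) (hh1 k)
          rw [if_pos ⟨hk, hk1⟩]
          linarith
        · have h3 : ‖h k t‖ ≤ δ := hhsmall k t hk1
          have hite : (0:ℝ) ≤ (if t ∉ Ks k ∧ t ∈ Ks (k + 1) then (1:ℝ) else 0) := by
            split <;> norm_num
          linarith
    -- at most one transition index
    have hcard : ((Finset.range n).filter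
        (fun k => t ∉ Ks k ∧ t ∈ Ks (k + 1))).card ≤ 1 := by
      rw [Finset.card_le_one]
      intro a ha b hb
      simp only [Finset.mem_filter] at ha hb
      by_contra hab
      rcases Nat.lt_or_ge a b with hlt | hge
      · exact hb.2.1 (hKsmono (a + 1) b hlt ha.2.2)
      · have : b < a := lt_of_le_of_ne hge (fun hc => hab hc.symm)
        exact ha.2.1 (hKsmono (b + 1) a this hb.2.2)
    -- sum estimate
    have hsum : ∑ k ∈ Finset.range n, ‖f t + gi t - h k t‖
        ≤ n * (1 + 2 * δ) + 1 := by
      calc ∑ k ∈ Finset.range n, ‖f t + gi t - h k t‖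
          ≤ ∑ k ∈ Finset.range n,
            ((1 + 2 * δ) + (if t ∉ Ks k ∧ t ∈ Ks (k + 1) then 1 else 0)) :=
            Finset.sum_le_sum fun k _ => hterm k
        _ = n * (1 + 2 * δ) + ∑ k ∈ Finset.range n,
            (if t ∉ Ks k ∧ t ∈ Ks (k + 1) then (1:ℝ) else 0) := by
            rw [Finset.sum_add_distrib, Finset.sum_const, Finset.card_range,
              nsmul_eq_mul]
        _ ≤ n * (1 + 2 * δ) + 1 := by
            have heq2 : ∑ k ∈ Finset.range n,
                (if t ∉ Ks k ∧ t ∈ Ks (k + 1) then (1:ℝ) else 0)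
                = (((Finset.range n).filter
                    (fun k => t ∉ Ks k ∧ t ∈ Ks (k + 1))).card : ℝ) := by
              rw [← Finset.sum_filter, Finset.sum_const, nsmul_eq_mul, mul_one]
            rw [heq2]
            have : (((Finset.range n).filter
                (fun k => t ∉ Ks k ∧ t ∈ Ks (k + 1))).card : ℝ) ≤ 1 := by
              exact_mod_cast hcard
            linarith
    -- combine
    rw [hdecomp]
    rw [norm_smul, Real.norm_eq_abs, abs_of_pos (inv_pos.mpr hnpos)]
    have hnorm : ‖∑ k ∈ Finset.range n, (f t + gi t - h k t)‖
        ≤ ∑ k ∈ Finset.range n, ‖f t + gi t - h k t‖ := norm_sum_le _ _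
    have hle : (n : ℝ)⁻¹ * ‖∑ k ∈ Finset.range n, (f t + gi t - h k t)‖
        ≤ (n : ℝ)⁻¹ * (n * (1 + 2 * δ) + 1) := by
      apply mul_le_mul_of_nonneg_left (le_trans hnorm hsum)
        (le_of_lt (inv_pos.mpr hnpos))
    have heq : (n : ℝ)⁻¹ * (n * (1 + 2 * δ) + 1) = (1 + 2 * δ) + (n : ℝ)⁻¹ := by
      field_simp
    have hninv : (n : ℝ)⁻¹ ≤ ε / 2 := by
      have h1 : (n : ℝ)⁻¹ ≤ (2 / ε)⁻¹ := inv_anti₀ (by positivity) hn.le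
      rwa [inv_div] at h1
    calc (n : ℝ)⁻¹ * ‖∑ k ∈ Finset.range n, (f t + gi t - h k t)‖
        ≤ (1 + 2 * δ) + (n : ℝ)⁻¹ := by rw [← heq]; exact hle
      _ ≤ 1 + ε := by rw [hδdef]; linarith
  -- small-outside-K0 facts for each gᵢ
  have hsmall : ∀ (gi : BoundedContinuousFunction L Y),
      {t | δ ≤ ‖gi t‖} ⊆ K0 → ∀ t, t ∉ K0 → ‖gi t‖ ≤ δ := by
    intro gi hsub t ht
    by_contra hc
    exact ht (hsub (le_of_lt (not_le.mp hc)))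
  refine ⟨main g₁ hn₁ (hsmall g₁ fun t ht => ?_),
          main g₂ hn₂ (hsmall g₂ fun t ht => ?_),
          main g₃ hn₃ (hsmall g₃ fun t ht => ?_)⟩
  · exact Set.mem_union_left _ (Set.mem_union_left _ ht)
  · exact Set.mem_union_left _ (Set.mem_union_right _ ht)
  · exact Set.mem_union_right _ ht
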